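/- Let $(\alpha,\beta)$ be a connected component of $\{t>0: Y(t)>0\}$ for the limit process $Y$ of the pathwise $\varepsilon$-approximations driven by a continuous path $g$. Then for every $t\in[\alpha,\beta]$, $Y(t) = \int_\alpha^t \frac{k}{Y(s)}\,ds - a\int_\alpha^t Y(s)\,ds + \sigma(g(t)-g(\alpha))$. -/

import Mathlib

open Filter Topology MeasureTheory Set

/-- If `f a ≤ c`, there is a last point `s₀` in `[a,b]` with `f s₀ ≤ c`;
after it, `f > c` on `(s₀, b]`. -/
lemma exists_last_le (f : ℝ → ℝ) (hf : Continuous f) (a b c : ℝ) (hab : a ≤ b)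
    (h0 : f a ≤ c) :
    ∃ s₀, s₀ ∈ Icc a b ∧ f s₀ ≤ c ∧ ∀ u, s₀ < u → u ≤ b → c < f u := by
  set S : Set ℝ := Icc a b ∩ f ⁻¹' (Iic c) with hS
  have hne : S.Nonempty := ⟨a, ⟨le_rfl, hab⟩, h0⟩
  have hbdd : BddAbove S := ⟨b, fun x hx => hx.1.2⟩
  have hclosed : IsClosed S := isClosed_Icc.inter (isClosed_Iic.preimage hf)
  have hmem : sSup S ∈ S := hclosed.csSup_mem hne hbdd
  refine ⟨sSup S, hmem.1, hmem.2, ?_⟩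
  intro u hu hub
  by_contra hle
  push_neg at hle
  have hau : a ≤ u := le_trans hmem.1.1 hu.le
  have : u ≤ sSup S := le_csSup hbdd ⟨⟨hau, hub⟩, hle⟩
  exact absurd hu (not_lt.mpr this)

/-- Monotone comparison of interval integrals with the bound required only on `Ioc`. -/
lemma integral_mono_Ioc {f h : ℝ → ℝ} {s t : ℝ} (hst : s ≤ t)
    (hf : IntervalIntegrable f volume s t) (hh : IntervalIntegrable h volume s t)
    (hb : ∀ u ∈ Ioc s t, f u ≤ h u) :
    ∫ u in s..t, f u ≤ ∫ u in s..t, h u := by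
  refine intervalIntegral.integral_mono_ae_restrict hst hf hh ?_
  rw [show volume.restrict (Icc s t) = volume.restrict (Ioc s t) from
    (Measure.restrict_congr_set Ioc_ae_eq_Icc.symm)]
  exact (ae_restrict_iff' measurableSet_Ioc).2 (ae_of_all _ hb)

set_option maxHeartbeats 3200000 in
theorem limit_process_equation_on_component
    (Y₀ k a σ : ℝ) (hY₀ : 0 < Y₀) (hk : 0 < k) (ha : 0 < a) (hσ : 0 < σ)
    (g : ℝ → ℝ) (hg : Continuous g) (hg0 : g 0 = 0)
    (Y : ℝ → ℝ → ℝ) (Ylim : ℝ → ℝ)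
    (hYc : ∀ ε : ℝ, 0 < ε → Continuous (Y ε))
    (hYeq : ∀ ε : ℝ, 0 < ε → ∀ t : ℝ, 0 ≤ t →
      Y ε t = Y₀ + (∫ s in (0:ℝ)..t, k / ((if 0 < Y ε s then Y ε s else 0) + ε))
        - a * (∫ s in (0:ℝ)..t, Y ε s) + σ * g t)
    (hlim : ∀ t : ℝ, 0 ≤ t →
      Tendsto (fun ε => Y ε t) (𝓝[>] 0) (𝓝 (Ylim t)))
    (α β : ℝ) (hα : 0 ≤ α) (hαβ : α < β)
    (hpos : ∀ t ∈ Set.Ioo α β, 0 < Ylim t)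
    (hαend : Ylim α ≤ 0) (hβend : Ylim β ≤ 0) :
    ∀ t ∈ Set.Icc α β,
      Ylim t = (∫ s in α..t, k / Ylim s) - a * (∫ s in α..t, Ylim s)
        + σ * (g t - g α) := by
  have hmax : ∀ y : ℝ, (if 0 < y then y else 0) = max y 0 := by
    intro y; rcases le_or_gt y 0 with h | h
    · rw [if_neg (not_lt.mpr h), max_eq_right h]
    · rw [if_pos h, max_eq_left h.le]
  set φ : ℝ → ℝ → ℝ := fun ε u => k / (max (Y ε u) 0 + ε) with hφdef
  have hden : ∀ ε : ℝ, 0 < ε → ∀ u, 0 < max (Y ε u) 0 + ε := fun ε hε u =>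
    add_pos_of_nonneg_of_pos (le_max_right _ _) hε
  have hφc : ∀ ε : ℝ, 0 < ε → Continuous (φ ε) := by
    intro ε hε
    exact continuous_const.div (((hYc ε hε).max continuous_const).add continuous_const)
      (fun u => (hden ε hε u).ne')
  have hφpos : ∀ ε : ℝ, 0 < ε → ∀ u, 0 < φ ε u := fun ε hε u => div_pos hk (hden ε hε u)
  have hYeq' : ∀ ε : ℝ, 0 < ε → ∀ t : ℝ, 0 ≤ t →
      Y ε t = Y₀ + (∫ s in (0:ℝ)..t, φ ε s) - a * (∫ s in (0:ℝ)..t, Y ε s) + σ * g t := by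
    intro ε hε t ht
    have := hYeq ε hε t ht
    simpa only [hmax, hφdef] using this
  have hY0 : ∀ ε : ℝ, 0 < ε → Y ε 0 = Y₀ := by
    intro ε hε
    simpa [hg0] using hYeq' ε hε 0 le_rfl
  have hYint : ∀ ε, 0 < ε → ∀ s t : ℝ, IntervalIntegrable (Y ε) volume s t :=
    fun ε hε s t => (hYc ε hε).intervalIntegrable s t
  have hφint : ∀ ε, 0 < ε → ∀ s t : ℝ, IntervalIntegrable (φ ε) volume s t :=
    fun ε hε s t => (hφc ε hε).intervalIntegrable s t
  have hdiff : ∀ ε, 0 < ε → ∀ s t : ℝ, 0 ≤ s → s ≤ t →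
      Y ε t - Y ε s = (∫ u in s..t, φ ε u) - a * (∫ u in s..t, Y ε u)
        + σ * (g t - g s) := by
    intro ε hε s t hs hst
    have h1 := hYeq' ε hε s hs
    have h2 := hYeq' ε hε t (hs.trans hst)
    have e1 : (∫ u in (0:ℝ)..s, φ ε u) + (∫ u in s..t, φ ε u) = ∫ u in (0:ℝ)..t, φ ε u :=
      intervalIntegral.integral_add_adjacent_intervals (hφint ε hε 0 s) (hφint ε hε s t)
    have e2 : (∫ u in (0:ℝ)..s, Y ε u) + (∫ u in s..t, Y ε u) = ∫ u in (0:ℝ)..t, Y ε u :=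
      intervalIntegral.integral_add_adjacent_intervals (hYint ε hε 0 s) (hYint ε hε s t)
    rw [h2, h1, ← e1, ← e2]; ring
  have hψint : ∀ ε, 0 < ε → ∀ s t : ℝ,
      IntervalIntegrable (fun u => φ ε u - a * Y ε u) volume s t := fun ε hε s t =>
    ((hφc ε hε).sub (continuous_const.mul (hYc ε hε))).intervalIntegrable s t
  have hdiff2 : ∀ ε, 0 < ε → ∀ s t : ℝ, 0 ≤ s → s ≤ t →
      Y ε t - Y ε s = (∫ u in s..t, (φ ε u - a * Y ε u)) + σ * (g t - g s) := by
    intro ε hε s t hs hst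
    rw [intervalIntegral.integral_sub (hφint ε hε s t) ((hYint ε hε s t).const_mul a),
      intervalIntegral.integral_const_mul]
    have := hdiff ε hε s t hs hst
    linarith
  have hβ0 : (0:ℝ) ≤ β := hα.trans hαβ.le
  obtain ⟨G, hG⟩ : ∃ G, ∀ u ∈ Icc (0:ℝ) β, |g u| ≤ G := by
    obtain ⟨C, hC⟩ :=
      (isCompact_Icc : IsCompact (Icc (0:ℝ) β)).exists_bound_of_continuousOn hg.continuousOn
    exact ⟨C, fun u hu => by simpa using hC u hu⟩
  have hG0 : 0 ≤ G := le_trans (abs_nonneg _) (hG 0 ⟨le_rfl, hβ0⟩)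
  set R : ℝ := max Y₀ (Real.sqrt (k / a)) with hRdef
  have hR : 0 < R := lt_of_lt_of_le hY₀ (le_max_left _ _)
  have hY₀R : Y₀ ≤ R := le_max_left _ _
  have hkR : k / R ≤ a * R := by
    rw [div_le_iff₀ hR]
    have h1 : Real.sqrt (k/a) ≤ R := le_max_right _ _
    have h2 : Real.sqrt (k/a) ^ 2 = k / a := Real.sq_sqrt (by positivity)
    have h3 : k / a * a = k := div_mul_cancel₀ k ha.ne'
    nlinarith [Real.sqrt_nonneg (k/a), mul_le_mul h1 h1 (Real.sqrt_nonneg (k/a)) hR.le]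
  set B : ℝ := R + 2 * (σ * G) with hBdef
  have hRB : R ≤ B := by nlinarith
  have hB0 : 0 < B := lt_of_lt_of_le hR hRB
  -- uniform upper bound
  have hub : ∀ ε, 0 < ε → ∀ t ∈ Icc (0:ℝ) β, Y ε t ≤ B := by
    intro ε hε t₀ ht₀
    by_contra hcon
    push_neg at hcon
    obtain ⟨s₀, hs₀mem, hs₀le, hafter⟩ :=
      exists_last_le (Y ε) (hYc ε hε) 0 t₀ R ht₀.1 (by rw [hY0 ε hε]; exact hY₀R)
    have hs₀t₀ : s₀ < t₀ := by
      rcases eq_or_lt_of_le hs₀mem.2 with h | h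
      · exfalso; rw [h] at hs₀le; exact absurd (hs₀le.trans hRB) (not_le.mpr hcon)
      · exact h
    have hψ : ∀ u ∈ Ioc s₀ t₀, φ ε u - a * Y ε u ≤ (0:ℝ) := by
      intro u hu
      have hYu : R < Y ε u := hafter u hu.1 hu.2
      have h1 : φ ε u ≤ k / R := by
        apply div_le_div_of_nonneg_left hk.le hR
        have : Y ε u ≤ max (Y ε u) 0 + ε := le_add_of_le_of_nonneg (le_max_left _ _) hε.le
        linarith
      have h2 : a * R ≤ a * Y ε u := by nlinarith
      linarith [hkR]
    have hint : (∫ u in s₀..t₀, (φ ε u - a * Y ε u)) ≤ ∫ u in s₀..t₀, (0:ℝ) :=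
      integral_mono_Ioc hs₀t₀.le (hψint ε hε s₀ t₀)
        (continuous_const.intervalIntegrable s₀ t₀) hψ
    rw [intervalIntegral.integral_zero] at hint
    have key := hdiff2 ε hε s₀ t₀ hs₀mem.1 hs₀t₀.le
    have hg1 : |g t₀| ≤ G := hG t₀ ht₀
    have hg2 : |g s₀| ≤ G := hG s₀ ⟨hs₀mem.1, hs₀mem.2.trans ht₀.2⟩
    have habs : σ * (g t₀ - g s₀) ≤ 2*(σ*G) := by
      have h1 := (abs_le.mp hg1).1
      have h2 := (abs_le.mp hg2).2
      nlinarith [abs_le.mp hg1, abs_le.mp hg2]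
    have : Y ε t₀ ≤ B := by rw [hBdef]; linarith
    exact absurd this (not_le.mpr hcon)
  -- monotonicity in ε
  have hmono : ∀ ε₁ ε₂ : ℝ, 0 < ε₁ → ε₁ ≤ ε₂ → ∀ t : ℝ, 0 ≤ t → Y ε₂ t ≤ Y ε₁ t := by
    intro ε₁ ε₂ hε₁ hε12 t₀ ht₀
    rcases eq_or_lt_of_le hε12 with rfl | hltε
    · exact le_rfl
    have hε₂ : 0 < ε₂ := hε₁.trans hltε
    by_contra hcon
    push_neg at hcon
    obtain ⟨s₀, hs₀mem, hs₀le, hafter⟩ :=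
      exists_last_le (fun u => Y ε₂ u - Y ε₁ u) ((hYc ε₂ hε₂).sub (hYc ε₁ hε₁)) 0 t₀ 0 ht₀
        (by show Y ε₂ 0 - Y ε₁ 0 ≤ 0; simp [hY0 ε₁ hε₁, hY0 ε₂ hε₂])
    have hs₀le' : Y ε₂ s₀ - Y ε₁ s₀ ≤ 0 := hs₀le
    have hs₀t₀ : s₀ < t₀ := by
      rcases eq_or_lt_of_le hs₀mem.2 with h | h
      · exfalso; rw [h] at hs₀le'; simp only [sub_nonpos] at hs₀le'
        exact absurd hs₀le' (not_le.mpr hcon)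
      · exact h
    have hbound : ∀ u ∈ Ioc s₀ t₀,
        (φ ε₂ u - a * Y ε₂ u) - (φ ε₁ u - a * Y ε₁ u) ≤ (0:ℝ) := by
      intro u hu
      have hDu : (0:ℝ) < Y ε₂ u - Y ε₁ u := hafter u hu.1 hu.2
      have h1 : φ ε₂ u ≤ φ ε₁ u := by
        apply div_le_div_of_nonneg_left hk.le (hden ε₁ hε₁ u)
        have hm : max (Y ε₁ u) 0 ≤ max (Y ε₂ u) 0 := max_le_max (by linarith) le_rfl
        linarith
      have h2 : a * Y ε₁ u ≤ a * Y ε₂ u := by nlinarith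
      linarith
    have hint : (∫ u in s₀..t₀,
        ((φ ε₂ u - a * Y ε₂ u) - (φ ε₁ u - a * Y ε₁ u))) ≤ ∫ u in s₀..t₀, (0:ℝ) :=
      integral_mono_Ioc hs₀t₀.le ((hψint ε₂ hε₂ s₀ t₀).sub (hψint ε₁ hε₁ s₀ t₀))
        (continuous_const.intervalIntegrable _ _) hbound
    rw [intervalIntegral.integral_zero,
      intervalIntegral.integral_sub (hψint ε₂ hε₂ s₀ t₀) (hψint ε₁ hε₁ s₀ t₀)] at hint
    have e2 := hdiff2 ε₂ hε₂ s₀ t₀ hs₀mem.1 hs₀t₀.le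
    have e1 := hdiff2 ε₁ hε₁ s₀ t₀ hs₀mem.1 hs₀t₀.le
    have hfin : Y ε₂ t₀ - Y ε₁ t₀ ≤ Y ε₂ s₀ - Y ε₁ s₀ := by linarith
    have : (0:ℝ) < Y ε₂ t₀ - Y ε₁ t₀ := by linarith
    linarith
  have hρ : Tendsto (fun n : ℕ => 1/(n+1 : ℝ)) atTop (𝓝[>] 0) := by
    refine tendsto_nhdsWithin_of_tendsto_nhds_of_eventually_within _
      tendsto_one_div_add_atTop_nhds_zero_nat
      (Eventually.of_forall fun n => mem_Ioi.mpr (by positivity))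
  have hle_lim : ∀ ε, 0 < ε → ∀ t : ℝ, 0 ≤ t → Y ε t ≤ Ylim t := by
    intro ε hε t ht
    refine ge_of_tendsto (hlim t ht) ?_
    filter_upwards [Ioc_mem_nhdsGT_of_mem (⟨le_rfl, hε⟩ : (0:ℝ) ∈ Ico 0 ε)] with ε' hε'
    exact hmono ε' ε hε'.1 hε'.2 t ht
  have hlim_ub : ∀ t ∈ Icc (0:ℝ) β, Ylim t ≤ B := by
    intro t ht
    refine le_of_tendsto (hlim t ht.1) ?_
    filter_upwards [self_mem_nhdsWithin] with ε' hε'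
    exact hub ε' hε' t ht
  -- nonnegativity of the limit
  have hgu : UniformContinuousOn g (Icc 0 β) :=
    isCompact_Icc.uniformContinuousOn_of_continuous hg.continuousOn
  have hnneg : ∀ τ ∈ Icc (0:ℝ) β, 0 ≤ Ylim τ := by
    intro τ hτ
    by_contra hcon
    push_neg at hcon
    set c : ℝ := -Ylim τ with hc
    have hc0 : 0 < c := by simp only [hc]; linarith
    obtain ⟨η, hη0, hηg⟩ := (Metric.uniformContinuousOn_iff).mp hgu (c/(2*σ)) (by positivity)
    set ε : ℝ := k * η / (2*(σ*G) + k) with hεdef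
    have hε0 : 0 < ε := by positivity
    have hYτ : Y ε τ ≤ -c := by
      have := hle_lim ε hε0 τ hτ.1
      simp only [hc, neg_neg]; linarith
    obtain ⟨s₀, hs₀mem, hs₀le, hafter⟩ :=
      exists_last_le (fun u => -Y ε u) (hYc ε hε0).neg 0 τ (c/2) hτ.1
        (by show -Y ε 0 ≤ c/2; rw [hY0 ε hε0]; linarith)
    have hs₀le' : -Y ε s₀ ≤ c/2 := hs₀le
    have hs₀τ : s₀ < τ := by
      rcases eq_or_lt_of_le hs₀mem.2 with h | h
      · exfalso; rw [h] at hs₀le'; linarith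
      · exact h
    have hbound : ∀ u ∈ Ioc s₀ τ, k/ε ≤ φ ε u - a * Y ε u := by
      intro u hu
      have hYu : Y ε u < -(c/2) := by
        have h' : c/2 < -Y ε u := hafter u hu.1 hu.2
        linarith
      have hmax0 : max (Y ε u) 0 = 0 := max_eq_right (by linarith)
      have hφu : φ ε u = k/ε := by simp only [hφdef, hmax0, zero_add]
      nlinarith
    have hint := integral_mono_Ioc hs₀τ.le (continuous_const.intervalIntegrable _ _)
      (hψint ε hε0 s₀ τ) hbound
    rw [intervalIntegral.integral_const, smul_eq_mul] at hint
    have key := hdiff2 ε hε0 s₀ τ hs₀mem.1 hs₀τ.le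
    have hL : Y ε τ - Y ε s₀ ≤ -(c/2) := by linarith
    have hτβ : τ ≤ β := hτ.2
    have hgτ : |g τ| ≤ G := hG τ hτ
    have hgs₀ : |g s₀| ≤ G := hG s₀ ⟨hs₀mem.1, hs₀mem.2.trans hτβ⟩
    rcases lt_or_ge (τ - s₀) η with hcase | hcase
    · have hd : dist τ s₀ < η := by
        rw [Real.dist_eq, abs_of_nonneg (by linarith)]; exact hcase
      have hdg := hηg τ ⟨hτ.1, hτβ⟩ s₀ ⟨hs₀mem.1, hs₀mem.2.trans hτβ⟩ hd
      rw [Real.dist_eq] at hdg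
      have h1 : -(c/(2*σ)) < g τ - g s₀ := (abs_lt.mp hdg).1
      have h2 : -(c/2) < σ * (g τ - g s₀) := by
        have hσc : σ * (c/(2*σ)) = c/2 := by field_simp
        nlinarith
      have h3 : 0 ≤ (τ - s₀) * (k/ε) :=
        mul_nonneg (by linarith) (by positivity)
      linarith
    · have h1 : η * (k/ε) = 2*(σ*G) + k := by
        rw [hεdef]; field_simp
      have h2 : 2*(σ*G) + k ≤ (τ - s₀) * (k/ε) := by
        rw [← h1]; exact mul_le_mul_of_nonneg_right hcase (by positivity)
      have h3 : -(2*(σ*G)) ≤ σ * (g τ - g s₀) := by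
        have e1 := (abs_le.mp hgτ).1
        have e2 := (abs_le.mp hgs₀).2
        nlinarith
      linarith
  have hlimα : Ylim α = 0 := le_antisymm hαend (hnneg α ⟨hα, hαβ.le⟩)
  have hlimβ : Ylim β = 0 := le_antisymm hβend (hnneg β ⟨hβ0, le_rfl⟩)
  -- uniform positive lower bound on compact subintervals
  have hlow : ∀ s t : ℝ, α < s → s ≤ t → t < β → ∃ ε₀ m : ℝ, 0 < ε₀ ∧ 0 < m ∧
      ∀ ε, 0 < ε → ε ≤ ε₀ → ∀ u ∈ Icc s t, m ≤ Y ε u := by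
    intro s t hαs hst htβ
    have hs0 : (0:ℝ) ≤ s := hα.trans hαs.le
    have hcov : Icc s t ⊆ ⋃ i : {e : ℝ // 0 < e}, {u | 0 < Y i.1 u} := by
      intro u hu
      have hu0 : (0:ℝ) ≤ u := hs0.trans hu.1
      have hupos : 0 < Ylim u := hpos u ⟨hαs.trans_le hu.1, lt_of_le_of_lt hu.2 htβ⟩
      have hev : ∀ᶠ ε in 𝓝[>] (0:ℝ), 0 < Y ε u :=
        (hlim u hu0).eventually (eventually_gt_nhds hupos)
      obtain ⟨ε, hYpos, hεpos⟩ := (hev.and self_mem_nhdsWithin).exists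
      exact mem_iUnion.mpr ⟨⟨ε, hεpos⟩, hYpos⟩
    obtain ⟨F, hF⟩ := (isCompact_Icc : IsCompact (Icc s t)).elim_finite_subcover
      (fun i : {e : ℝ // 0 < e} => {u | 0 < Y i.1 u})
      (fun i => isOpen_lt continuous_const (hYc i.1 i.2)) hcov
    have hFne : F.Nonempty := by
      rcases Finset.eq_empty_or_nonempty F with rfl | h
      · exfalso
        have := hF ⟨le_rfl, hst⟩
        simpa using this
      · exact h
    set ε₀ := F.inf' hFne (fun i => i.1) with hε₀def
    have hε₀pos : 0 < ε₀ := (Finset.lt_inf'_iff hFne).mpr fun i _ => i.2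
    have hKpos : ∀ u ∈ Icc s t, 0 < Y ε₀ u := by
      intro u hu
      obtain ⟨i, hiF, hiu⟩ : ∃ i ∈ F, 0 < Y i.1 u := by simpa using hF hu
      exact lt_of_lt_of_le hiu
        (hmono ε₀ i.1 hε₀pos (Finset.inf'_le _ hiF) u (hs0.trans hu.1))
    obtain ⟨x₀, hx₀K, hx₀min⟩ := (isCompact_Icc : IsCompact (Icc s t)).exists_isMinOn
      ⟨s, le_rfl, hst⟩ (hYc ε₀ hε₀pos).continuousOn
    refine ⟨ε₀, Y ε₀ x₀, hε₀pos, hKpos x₀ hx₀K, ?_⟩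
    intro ε hε hεε₀ u hu
    exact le_trans (isMinOn_iff.mp hx₀min u hu)
      (hmono ε ε₀ hε hεε₀ u (hs0.trans hu.1))
  -- measurability and integrability of Ylim
  have hmeas : AEStronglyMeasurable Ylim (volume.restrict (Ioc 0 β)) := by
    have hae : ∀ᵐ u ∂(volume.restrict (Ioc (0:ℝ) β)),
        Tendsto (fun n : ℕ => Y (1/(n+1:ℝ)) u) atTop (𝓝 (Ylim u)) := by
      refine (ae_restrict_iff' measurableSet_Ioc).2 (ae_of_all _ fun u hu => ?_)
      exact (hlim u hu.1.le).comp hρ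
    exact (aemeasurable_of_tendsto_metrizable_ae atTop
      (fun n => ((hYc _ (by positivity)).measurable).aemeasurable) hae).aestronglyMeasurable
  obtain ⟨C1, hC1⟩ :=
    (isCompact_Icc : IsCompact (Icc (0:ℝ) β)).exists_bound_of_continuousOn
      (hYc 1 one_pos).continuousOn
  set B₂ : ℝ := max B C1 with hB₂def
  have hYlimlb : ∀ u ∈ Icc (0:ℝ) β, -B₂ ≤ Ylim u := by
    intro u hu
    have h1 : Y 1 u ≤ Ylim u := hle_lim 1 one_pos u hu.1
    have h2 : |Y 1 u| ≤ C1 := by simpa using hC1 u hu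
    have h3 : -B₂ ≤ -C1 := neg_le_neg (le_max_right B C1)
    linarith [(abs_le.mp h2).1]
  have hYlimabs : ∀ u ∈ Icc (0:ℝ) β, |Ylim u| ≤ B₂ := by
    intro u hu
    rw [abs_le]
    exact ⟨hYlimlb u hu, (hlim_ub u hu).trans (le_max_left _ _)⟩
  have hB₂0 : 0 < B₂ := lt_of_lt_of_le hB0 (le_max_left _ _)
  have hYlimInt : IntegrableOn Ylim (Ioc 0 β) := by
    refine Integrable.mono' (g := fun _ => B₂)
      ((integrableOn_const_iff).2 (Or.inr measure_Ioc_lt_top)) hmeas ?_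
    refine (ae_restrict_iff' measurableSet_Ioc).2 (ae_of_all _ fun u hu => ?_)
    rw [Real.norm_eq_abs]
    exact hYlimabs u ⟨hu.1.le, hu.2⟩
  have hYlimIntSub : ∀ s t : ℝ, 0 ≤ s → t ≤ β → IntegrableOn Ylim (Ioc s t) :=
    fun s t hs ht => hYlimInt.mono_set (Ioc_subset_Ioc hs ht)
  have hmeasSub : ∀ s t : ℝ, 0 ≤ s → t ≤ β →
      AEStronglyMeasurable Ylim (volume.restrict (Ioc s t)) := fun s t hs ht =>
    hmeas.mono_measure (Measure.restrict_mono (Ioc_subset_Ioc hs ht) le_rfl)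
  -- interior equation
  have heqin : ∀ s t : ℝ, α < s → s ≤ t → t < β →
      Ylim t - Ylim s = (∫ u in s..t, k / Ylim u) - a * (∫ u in s..t, Ylim u)
        + σ * (g t - g s) := by
    intro s t hαs hst htβ
    have hs0 : (0:ℝ) ≤ s := hα.trans hαs.le
    obtain ⟨ε₀, m, hε₀, hm, hlb⟩ := hlow s t hαs hst htβ
    set ρ' : ℕ → ℝ := fun n => min ε₀ (1/(n+1:ℝ)) with hρ'def
    have hseq : ∀ n : ℕ, 0 < ρ' n := fun n => lt_min hε₀ (by positivity)
    have hseqle : ∀ n, ρ' n ≤ ε₀ := fun n => min_le_left _ _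
    have hρ'0 : Tendsto ρ' atTop (𝓝[>] 0) := by
      refine tendsto_nhdsWithin_of_tendsto_nhds_of_eventually_within _ ?_
        (Eventually.of_forall fun n => mem_Ioi.mpr (hseq n))
      have h0 : Tendsto (fun n : ℕ => min ε₀ (1/(n+1:ℝ))) atTop (𝓝 (min ε₀ 0)) :=
        tendsto_const_nhds.min tendsto_one_div_add_atTop_nhds_zero_nat
      rwa [min_eq_right hε₀.le] at h0
    have hρ'0' : Tendsto ρ' atTop (𝓝 0) := hρ'0.mono_right nhdsWithin_le_nhds
    have hsub : Ioc s t ⊆ Icc 0 β := fun u hu =>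
      ⟨hs0.trans hu.1.le, hu.2.trans htβ.le⟩
    -- convergence of ∫ Y
    have hIYtend : Tendsto (fun n => ∫ u in Ioc s t, Y (ρ' n) u) atTop
        (𝓝 (∫ u in Ioc s t, Ylim u)) := by
      refine tendsto_integral_filter_of_dominated_convergence (fun _ => B)
        (Eventually.of_forall fun n => (hYc _ (hseq n)).aestronglyMeasurable.restrict)
        (Eventually.of_forall fun n => ?_)
        ((integrableOn_const_iff).2 (Or.inr measure_Ioc_lt_top)) ?_
      · refine (ae_restrict_iff' measurableSet_Ioc).2 (ae_of_all _ fun u hu => ?_)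
        rw [Real.norm_eq_abs, abs_le]
        constructor
        · have := hlb (ρ' n) (hseq n) (hseqle n) u ⟨hu.1.le, hu.2⟩
          linarith
        · exact hub _ (hseq n) u (hsub hu)
      · refine (ae_restrict_iff' measurableSet_Ioc).2 (ae_of_all _ fun u hu => ?_)
        exact (hlim u (hs0.trans hu.1.le)).comp hρ'0
    -- convergence of ∫ φ
    have hIφtend : Tendsto (fun n => ∫ u in Ioc s t, φ (ρ' n) u) atTop
        (𝓝 (∫ u in Ioc s t, k / Ylim u)) := by
      refine tendsto_integral_filter_of_dominated_convergence (fun _ => k/m)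
        (Eventually.of_forall fun n => (hφc _ (hseq n)).aestronglyMeasurable.restrict)
        (Eventually.of_forall fun n => ?_)
        ((integrableOn_const_iff).2 (Or.inr measure_Ioc_lt_top)) ?_
      · refine (ae_restrict_iff' measurableSet_Ioc).2 (ae_of_all _ fun u hu => ?_)
        rw [Real.norm_eq_abs, abs_of_pos (hφpos _ (hseq n) u)]
        apply div_le_div_of_nonneg_left hk.le hm
        have h1 : m ≤ Y (ρ' n) u := hlb (ρ' n) (hseq n) (hseqle n) u ⟨hu.1.le, hu.2⟩
        have h2 : Y (ρ' n) u ≤ max (Y (ρ' n) u) 0 := le_max_left _ _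
        linarith [(hseq n).le]
      · refine (ae_restrict_iff' measurableSet_Ioc).2 (ae_of_all _ fun u hu => ?_)
        have hYlimu : 0 < Ylim u := hpos u ⟨hαs.trans_le hu.1.le, lt_of_le_of_lt hu.2 htβ⟩
        have h1 : Tendsto (fun n => Y (ρ' n) u) atTop (𝓝 (Ylim u)) :=
          (hlim u (hs0.trans hu.1.le)).comp hρ'0
        have h3 : Tendsto (fun n => max (Y (ρ' n) u) 0 + ρ' n) atTop
            (𝓝 (max (Ylim u) 0 + 0)) := (h1.max tendsto_const_nhds).add hρ'0'
        rw [max_eq_left hYlimu.le, add_zero] at h3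
        have h4 : Tendsto (fun n => k / (max (Y (ρ' n) u) 0 + ρ' n)) atTop
            (𝓝 (k / Ylim u)) := tendsto_const_nhds.div h3 hYlimu.ne'
        exact h4
    have heqn : ∀ n : ℕ, Y (ρ' n) t - Y (ρ' n) s =
        (∫ u in Ioc s t, φ (ρ' n) u) - a * (∫ u in Ioc s t, Y (ρ' n) u)
          + σ * (g t - g s) := by
      intro n
      have h := hdiff (ρ' n) (hseq n) s t hs0 hst
      rwa [intervalIntegral.integral_of_le hst, intervalIntegral.integral_of_le hst] at h
    have hLHS : Tendsto (fun n => Y (ρ' n) t - Y (ρ' n) s) atTop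
        (𝓝 (Ylim t - Ylim s)) :=
      ((hlim t (hs0.trans hst)).comp hρ'0).sub ((hlim s hs0).comp hρ'0)
    have hRHS : Tendsto (fun n => Y (ρ' n) t - Y (ρ' n) s) atTop
        (𝓝 ((∫ u in Ioc s t, k / Ylim u) - a * (∫ u in Ioc s t, Ylim u)
          + σ * (g t - g s))) := by
      have := (hIφtend.sub (hIYtend.const_mul a)).add_const (σ * (g t - g s))
      exact this.congr fun n => (heqn n).symm
    have heq := tendsto_nhds_unique hLHS hRHS
    rw [intervalIntegral.integral_of_le hst, intervalIntegral.integral_of_le hst]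
    exact heq
  -- right-continuity at α
  have hrc : ∀ c : ℝ, 0 < c → ∃ δ : ℝ, 0 < δ ∧
      ∀ s, α < s → s < β → s - α < δ → Ylim s < c := by
    intro c hc0
    obtain ⟨η, hη0, hηg⟩ := (Metric.uniformContinuousOn_iff).mp hgu (c/(8*σ)) (by positivity)
    refine ⟨min η (c*c/(16*k)), lt_min hη0 (by positivity), ?_⟩
    intro s hαs hsβ hsδ
    by_contra hcon
    push_neg at hcon
    have hs0 : (0:ℝ) ≤ s := hα.trans hαs.le
    have hsβ' : s ≤ β := hsβ.le
    have hev : ∀ᶠ ε in 𝓝[>] (0:ℝ), 3*c/4 < Y ε s :=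
      (hlim s hs0).eventually (eventually_gt_nhds (by linarith))
    obtain ⟨ε, hYs, hε0'⟩ := (hev.and self_mem_nhdsWithin).exists
    have hε0 : (0:ℝ) < ε := hε0'
    have hYα : Y ε α ≤ 0 := by
      have h := hle_lim ε hε0 α hα
      rw [hlimα] at h; exact h
    obtain ⟨u₀, hu₀mem, hu₀le, hafter⟩ :=
      exists_last_le (Y ε) (hYc ε hε0) α s (c/2) hαs.le (by linarith)
    have hu₀s : u₀ < s := by
      rcases eq_or_lt_of_le hu₀mem.2 with h | h
      · exfalso; rw [h] at hu₀le; linarith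
      · exact h
    have hbound : ∀ u ∈ Ioc u₀ s, φ ε u - a * Y ε u ≤ 2*k/c := by
      intro u hu
      have hYu : c/2 < Y ε u := hafter u hu.1 hu.2
      have heq2 : k/(c/2) = 2*k/c := by
        rw [div_div_eq_mul_div]; ring
      have h1 : φ ε u ≤ k / (c/2) := by
        apply div_le_div_of_nonneg_left hk.le (by positivity)
        have h2 : Y ε u ≤ max (Y ε u) 0 := le_max_left _ _
        linarith
      have h3 : 0 < a * Y ε u := mul_pos ha (lt_trans (by positivity) hYu)
      linarith
    have hint := integral_mono_Ioc hu₀s.le (hψint ε hε0 u₀ s)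
      (continuous_const.intervalIntegrable _ _) hbound
    rw [intervalIntegral.integral_const, smul_eq_mul] at hint
    have key := hdiff2 ε hε0 u₀ s (hα.trans hu₀mem.1) hu₀s.le
    have hd : dist s u₀ < η := by
      rw [Real.dist_eq, abs_of_nonneg (by linarith [hu₀s.le])]
      calc s - u₀ ≤ s - α := by linarith [hu₀mem.1]
        _ < min η (c*c/(16*k)) := hsδ
        _ ≤ η := min_le_left _ _
    have hdg := hηg s ⟨hs0, hsβ'⟩ u₀ ⟨hα.trans hu₀mem.1, hu₀mem.2.trans hsβ'⟩ hd
    rw [Real.dist_eq] at hdg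
    have hgb : σ * (g s - g u₀) ≤ c/8 := by
      have h1 := (abs_lt.mp hdg).2
      have hσc : σ * (c/(8*σ)) = c/8 := by field_simp
      nlinarith
    have hlen : (s - u₀) * (2*k/c) < c/8 := by
      have h1 : s - u₀ ≤ s - α := by linarith [hu₀mem.1]
      have h2 : s - α < c*c/(16*k) := lt_of_lt_of_le hsδ (min_le_right _ _)
      have h3 : (0:ℝ) < 2*k/c := by positivity
      have h4 : (s - u₀) * (2*k/c) ≤ (s - α) * (2*k/c) :=
        mul_le_mul_of_nonneg_right h1 h3.le
      have h5 : (s - α) * (2*k/c) < (c*c/(16*k)) * (2*k/c) :=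
        mul_lt_mul_of_pos_right h2 h3
      have h6 : (c*c/(16*k)) * (2*k/c) = c/8 := by field_simp; ring
      linarith
    have hlhs : c/4 ≤ Y ε s - Y ε u₀ := by linarith
    linarith
  -- main interior equation from α
  have hYlimII : ∀ x y : ℝ, 0 ≤ x → y ≤ β → x ≤ y →
      IntervalIntegrable Ylim volume x y := fun x y hx hy hxy =>
    (intervalIntegrable_iff_integrableOn_Ioc_of_le hxy).2 (hYlimIntSub x y hx hy)
  have main : ∀ t : ℝ, α < t → t < β →
      IntegrableOn (fun u => k / Ylim u) (Ioc α t) ∧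
      Ylim t = (∫ u in α..t, k / Ylim u) - a * (∫ u in α..t, Ylim u)
        + σ * (g t - g α) := by
    intro t hαt htβ
    have ht0 : (0:ℝ) ≤ t := hα.trans hαt.le
    have htα : 0 < t - α := sub_pos.mpr hαt
    set sn : ℕ → ℝ := fun n => α + (t - α)/(n+2:ℝ) with hsndef
    have hsn1 : ∀ n : ℕ, α < sn n := by
      intro n
      have h : 0 < (t-α)/(n+2:ℝ) := by positivity
      simp only [hsndef]; linarith
    have hsn2 : ∀ n : ℕ, sn n ≤ t := by
      intro n
      have h1 : (t-α)/(n+2:ℝ) ≤ (t - α)/1 := by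
        apply div_le_div_of_nonneg_left htα.le one_pos
        have h2 : (0:ℝ) ≤ (n:ℝ) := Nat.cast_nonneg n
        linarith
      rw [div_one] at h1
      simp only [hsndef]
      linarith
    have hsnβ : ∀ n, sn n < β := fun n => lt_of_le_of_lt (hsn2 n) htβ
    have hsn0 : ∀ n, (0:ℝ) ≤ sn n := fun n => hα.trans (hsn1 n).le
    have hsn_tendsto : Tendsto sn atTop (𝓝 α) := by
      have h1 : ∀ n : ℕ, (t-α)/(n+2:ℝ) ≤ (t-α) * (1/(n+1:ℝ)) := by
        intro n
        rw [mul_one_div]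
        apply div_le_div_of_nonneg_left htα.le (by positivity)
        push_cast; linarith
      have h2 : Tendsto (fun n : ℕ => (t-α) * (1/(n+1:ℝ))) atTop (𝓝 ((t-α) * 0)) :=
        tendsto_one_div_add_atTop_nhds_zero_nat.const_mul (t-α)
      rw [mul_zero] at h2
      have h3 : Tendsto (fun n : ℕ => (t-α)/(n+2:ℝ)) atTop (𝓝 0) :=
        squeeze_zero (fun n => by positivity) h1 h2
      have h4 := h3.const_add α
      rw [add_zero] at h4
      exact h4
    have hYlim_sn : Tendsto (fun n => Ylim (sn n)) atTop (𝓝 0) := by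
      rw [Metric.tendsto_atTop]
      intro c hc
      obtain ⟨δ, hδ0, hδ⟩ := hrc c hc
      obtain ⟨N, hN⟩ := Metric.tendsto_atTop.mp hsn_tendsto δ hδ0
      refine ⟨N, fun n hn => ?_⟩
      have h1 := hN n hn
      rw [Real.dist_eq, abs_of_pos (sub_pos.mpr (hsn1 n))] at h1
      have h3 : Ylim (sn n) < c := hδ (sn n) (hsn1 n) (hsnβ n) h1
      have h4 : 0 < Ylim (sn n) := hpos _ ⟨hsn1 n, hsnβ n⟩
      rw [Real.dist_eq, sub_zero, abs_of_pos h4]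
      exact h3
    have hgsn : Tendsto (fun n => g (sn n)) atTop (𝓝 (g α)) :=
      (hg.tendsto α).comp hsn_tendsto
    have hsplit : ∀ n, (∫ u in (sn n)..t, Ylim u) =
        (∫ u in α..t, Ylim u) - (∫ u in α..(sn n), Ylim u) := by
      intro n
      have h := intervalIntegral.integral_add_adjacent_intervals
        (hYlimII α (sn n) hα (hsnβ n).le (hsn1 n).le)
        (hYlimII (sn n) t (hsn0 n) htβ.le (hsn2 n))
      linarith
    have htail : Tendsto (fun n => ∫ u in α..(sn n), Ylim u) atTop (𝓝 0) := by
      have hb : ∀ n : ℕ, ‖∫ u in α..(sn n), Ylim u‖ ≤ B₂ * |sn n - α| := by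
        intro n
        apply intervalIntegral.norm_integral_le_of_norm_le_const
        intro x hx
        rw [uIoc_of_le (hsn1 n).le] at hx
        rw [Real.norm_eq_abs]
        exact hYlimabs x ⟨hα.trans hx.1.le, hx.2.trans (hsnβ n).le⟩
      have ha : Tendsto (fun n => B₂ * |sn n - α|) atTop (𝓝 0) := by
        have h1 : Tendsto (fun n => sn n - α) atTop (𝓝 0) := by
          simpa using hsn_tendsto.sub_const α
        have h2 := h1.abs.const_mul B₂
        simpa using h2
      exact squeeze_zero_norm hb ha
    have hIY : Tendsto (fun n => ∫ u in (sn n)..t, Ylim u) atTop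
        (𝓝 (∫ u in α..t, Ylim u)) := by
      have h : Tendsto (fun n : ℕ => (∫ u in α..t, Ylim u)
          - (∫ u in α..(sn n), Ylim u)) atTop (𝓝 ((∫ u in α..t, Ylim u) - 0)) :=
        tendsto_const_nhds.sub htail
      rw [sub_zero] at h
      exact h.congr fun n => (hsplit n).symm
    set L : ℝ := Ylim t + a * (∫ u in α..t, Ylim u) - σ * (g t - g α) with hLdef
    have hIφ : Tendsto (fun n => ∫ u in (sn n)..t, k / Ylim u) atTop (𝓝 L) := by
      have hcongr : ∀ n, (∫ u in (sn n)..t, k / Ylim u) =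
          Ylim t - Ylim (sn n) + a * (∫ u in (sn n)..t, Ylim u)
            - σ * (g t - g (sn n)) := by
        intro n
        have h := heqin (sn n) t (hsn1 n) (hsn2 n) htβ
        linarith
      have h : Tendsto (fun n => Ylim t - Ylim (sn n)
          + a * (∫ u in (sn n)..t, Ylim u) - σ * (g t - g (sn n))) atTop
          (𝓝 (Ylim t - 0 + a * (∫ u in α..t, Ylim u) - σ * (g t - g α))) :=
        ((tendsto_const_nhds.sub hYlim_sn).add (hIY.const_mul a)).sub
          ((tendsto_const_nhds.sub hgsn).const_mul σ)
      have heq : Ylim t - 0 + a * (∫ u in α..t, Ylim u) - σ * (g t - g α) = L := by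
        rw [hLdef]; ring
      rw [heq] at h
      exact h.congr fun n => (hcongr n).symm
    have hφmem : ∀ n : ℕ, IntegrableOn (fun u => k / Ylim u) (Ioc (sn n) t) := by
      intro n
      obtain ⟨ε₀, m, hε₀, hm, hlb⟩ := hlow (sn n) t (hsn1 n) (hsn2 n) htβ
      refine Integrable.mono' (g := fun _ => k/m)
        ((integrableOn_const_iff).2 (Or.inr measure_Ioc_lt_top))
        ((aemeasurable_const.div
          (hmeasSub (sn n) t (hsn0 n) htβ.le).aemeasurable).aestronglyMeasurable) ?_
      refine (ae_restrict_iff' measurableSet_Ioc).2 (ae_of_all _ fun u hu => ?_)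
      have h1 : m ≤ Y ε₀ u := hlb ε₀ hε₀ le_rfl u ⟨hu.1.le, hu.2⟩
      have h2 : Y ε₀ u ≤ Ylim u := hle_lim ε₀ hε₀ u ((hsn0 n).trans hu.1.le)
      have h3 : 0 < Ylim u := lt_of_lt_of_le hm (h1.trans h2)
      rw [Real.norm_eq_abs, abs_of_pos (div_pos hk h3)]
      exact div_le_div_of_nonneg_left hk.le hm (h1.trans h2)
    have hcover : AECover (volume.restrict (Ioc α t)) atTop
        (fun n : ℕ => Ioc (sn n) t) := by
      refine ⟨?_, fun n => measurableSet_Ioc⟩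
      refine (ae_restrict_iff' measurableSet_Ioc).2 (ae_of_all _ fun x hx => ?_)
      filter_upwards [hsn_tendsto.eventually_lt_const hx.1] with n hn
      exact ⟨hn, hx.2⟩
    have hAeq : ∀ n : ℕ, (volume.restrict (Ioc α t)).restrict (Ioc (sn n) t)
        = volume.restrict (Ioc (sn n) t) := by
      intro n
      rw [Measure.restrict_restrict measurableSet_Ioc]
      congr 1
      rw [Ioc_inter_Ioc, max_eq_left (hsn1 n).le, min_self]
    have hfi : ∀ n : ℕ, IntegrableOn (fun u => k / Ylim u) (Ioc (sn n) t)
        (volume.restrict (Ioc α t)) := by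
      intro n
      rw [IntegrableOn, hAeq n]
      exact hφmem n
    have hnng : 0 ≤ᶠ[ae (volume.restrict (Ioc α t))] (fun u => k / Ylim u) := by
      refine (ae_restrict_iff' measurableSet_Ioc).2 (ae_of_all _ fun u hu => ?_)
      have h3 : 0 < Ylim u := hpos u ⟨hu.1, lt_of_le_of_lt hu.2 htβ⟩
      exact (div_pos hk h3).le
    have htendsto' : Tendsto (fun n : ℕ => ∫ u in Ioc (sn n) t, (k / Ylim u)
        ∂(volume.restrict (Ioc α t))) atTop (𝓝 L) := by
      refine hIφ.congr fun n => ?_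
      rw [intervalIntegral.integral_of_le (hsn2 n)]
      show ∫ u in Ioc (sn n) t, (k / Ylim u) ∂volume
        = ∫ u in Ioc (sn n) t, (k / Ylim u) ∂(volume.restrict (Ioc α t))
      rw [show ∫ u in Ioc (sn n) t, (k / Ylim u) ∂(volume.restrict (Ioc α t))
        = ∫ u, (k / Ylim u) ∂((volume.restrict (Ioc α t)).restrict (Ioc (sn n) t)) from rfl,
        hAeq n]
    have hInt : Integrable (fun u => k / Ylim u) (volume.restrict (Ioc α t)) :=
      hcover.integrable_of_integral_tendsto_of_nonneg_ae L hfi hnng htendsto'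
    have hIeq : (∫ u in Ioc α t, k / Ylim u) = L := by
      have h := hcover.integral_eq_of_tendsto L hInt htendsto'
      rwa [show (∫ u, (k / Ylim u) ∂(volume.restrict (Ioc α t)))
        = ∫ u in Ioc α t, k / Ylim u from rfl] at h
    refine ⟨hInt, ?_⟩
    rw [intervalIntegral.integral_of_le hαt.le, hIeq, hLdef]
    ring
  have hup : ∀ t : ℝ, α < t → t < β →
      Ylim t ≤ (β - t) * (a * B) + σ * (g t - g β) := by
    intro t hαt htβ
    have ht0 : (0:ℝ) ≤ t := hα.trans hαt.le
    refine le_of_tendsto (hlim t ht0) ?_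
    filter_upwards [self_mem_nhdsWithin] with ε hε'
    have hε : (0:ℝ) < ε := hε'
    have key := hdiff2 ε hε t β ht0 htβ.le
    have hbound : ∀ u ∈ Ioc t β, -(a*B) ≤ φ ε u - a * Y ε u := by
      intro u hu
      have h1 : Y ε u ≤ B := hub ε hε u ⟨ht0.trans hu.1.le, hu.2⟩
      have h2 : 0 < φ ε u := hφpos ε hε u
      nlinarith
    have hint := integral_mono_Ioc htβ.le (continuous_const.intervalIntegrable _ _)
      (hψint ε hε t β) hbound
    rw [intervalIntegral.integral_const, smul_eq_mul] at hint
    have hYβ : Y ε β ≤ 0 := by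
      have h := hle_lim ε hε β hβ0
      rw [hlimβ] at h; exact h
    nlinarith
  have atβ : Ylim β = (∫ u in α..β, k / Ylim u) - a * (∫ u in α..β, Ylim u)
      + σ * (g β - g α) := by
    have hβα : 0 < β - α := sub_pos.mpr hαβ
    set tn : ℕ → ℝ := fun n => β - (β - α)/(n+2:ℝ) with htndef
    have htn1 : ∀ n : ℕ, α < tn n := by
      intro n
      have h : (β-α)/(n+2:ℝ) < β - α := by
        apply div_lt_self hβα
        have h2 : (0:ℝ) ≤ (n:ℝ) := Nat.cast_nonneg n
        linarith
      simp only [htndef]; linarith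
    have htn2 : ∀ n : ℕ, tn n < β := by
      intro n
      have h : 0 < (β-α)/(n+2:ℝ) := by positivity
      simp only [htndef]; linarith
    have htn_tendsto : Tendsto tn atTop (𝓝 β) := by
      have h1 : ∀ n : ℕ, (β-α)/(n+2:ℝ) ≤ (β-α) * (1/(n+1:ℝ)) := by
        intro n
        rw [mul_one_div]
        apply div_le_div_of_nonneg_left hβα.le (by positivity)
        push_cast; linarith
      have h2 : Tendsto (fun n : ℕ => (β-α) * (1/(n+1:ℝ))) atTop (𝓝 ((β-α) * 0)) :=
        tendsto_one_div_add_atTop_nhds_zero_nat.const_mul (β-α)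
      rw [mul_zero] at h2
      have h3 : Tendsto (fun n : ℕ => (β-α)/(n+2:ℝ)) atTop (𝓝 0) :=
        squeeze_zero (fun n => by positivity) h1 h2
      have h4 := h3.const_sub β
      rw [sub_zero] at h4
      exact h4
    have hgtn : Tendsto (fun n => g (tn n)) atTop (𝓝 (g β)) :=
      (hg.tendsto β).comp htn_tendsto
    have hYlim_tn : Tendsto (fun n => Ylim (tn n)) atTop (𝓝 0) := by
      refine squeeze_zero (fun n => (hpos _ ⟨htn1 n, htn2 n⟩).le)
        (fun n => hup (tn n) (htn1 n) (htn2 n)) ?_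
      have h1 : Tendsto (fun n => (β - tn n) * (a * B)) atTop (𝓝 (0 * (a*B))) := by
        apply Tendsto.mul_const
        have := tendsto_const_nhds.sub htn_tendsto (f := fun _ : ℕ => β)
        rwa [sub_self] at this
      have h2 : Tendsto (fun n => σ * (g (tn n) - g β)) atTop (𝓝 (σ * 0)) := by
        apply Tendsto.const_mul
        have := hgtn.sub tendsto_const_nhds (g := fun _ : ℕ => g β)
        rwa [sub_self] at this
      have h3 := h1.add h2
      rw [zero_mul, mul_zero, add_zero] at h3
      exact h3
    have hsplit : ∀ n, (∫ u in α..(tn n), Ylim u) =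
        (∫ u in α..β, Ylim u) - (∫ u in (tn n)..β, Ylim u) := by
      intro n
      have h := intervalIntegral.integral_add_adjacent_intervals
        (hYlimII α (tn n) hα (htn2 n).le (htn1 n).le)
        (hYlimII (tn n) β (hα.trans (htn1 n).le) le_rfl (htn2 n).le)
      linarith
    have htail : Tendsto (fun n => ∫ u in (tn n)..β, Ylim u) atTop (𝓝 0) := by
      have hb : ∀ n : ℕ, ‖∫ u in (tn n)..β, Ylim u‖ ≤ B₂ * |β - tn n| := by
        intro n
        apply intervalIntegral.norm_integral_le_of_norm_le_const
        intro x hx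
        rw [uIoc_of_le (htn2 n).le] at hx
        rw [Real.norm_eq_abs]
        exact hYlimabs x ⟨(hα.trans (htn1 n).le).trans hx.1.le, hx.2⟩
      have ha : Tendsto (fun n => B₂ * |β - tn n|) atTop (𝓝 0) := by
        have h1 : Tendsto (fun n => β - tn n) atTop (𝓝 0) := by
          have := tendsto_const_nhds.sub htn_tendsto (f := fun _ : ℕ => β)
          rwa [sub_self] at this
        have h2 := h1.abs.const_mul B₂
        simpa using h2
      exact squeeze_zero_norm hb ha
    have hIY : Tendsto (fun n => ∫ u in α..(tn n), Ylim u) atTop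
        (𝓝 (∫ u in α..β, Ylim u)) := by
      have h : Tendsto (fun n : ℕ => (∫ u in α..β, Ylim u)
          - (∫ u in (tn n)..β, Ylim u)) atTop (𝓝 ((∫ u in α..β, Ylim u) - 0)) :=
        tendsto_const_nhds.sub htail
      rw [sub_zero] at h
      exact h.congr fun n => (hsplit n).symm
    set Lβ : ℝ := a * (∫ u in α..β, Ylim u) - σ * (g β - g α) with hLβdef
    have hIφ : Tendsto (fun n => ∫ u in α..(tn n), k / Ylim u) atTop (𝓝 Lβ) := by
      have hcongr : ∀ n, (∫ u in α..(tn n), k / Ylim u) =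
          Ylim (tn n) + a * (∫ u in α..(tn n), Ylim u) - σ * (g (tn n) - g α) := by
        intro n
        have h := (main (tn n) (htn1 n) (htn2 n)).2
        linarith
      have h : Tendsto (fun n => Ylim (tn n) + a * (∫ u in α..(tn n), Ylim u)
          - σ * (g (tn n) - g α)) atTop
          (𝓝 (0 + a * (∫ u in α..β, Ylim u) - σ * (g β - g α))) :=
        (hYlim_tn.add (hIY.const_mul a)).sub ((hgtn.sub_const (g α)).const_mul σ)
      have heq : 0 + a * (∫ u in α..β, Ylim u) - σ * (g β - g α) = Lβ := by
        rw [hLβdef]; ring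
      rw [heq] at h
      exact h.congr fun n => (hcongr n).symm
    have hcover : AECover (volume.restrict (Ioo α β)) atTop
        (fun n : ℕ => Ioc α (tn n)) := by
      refine ⟨?_, fun n => measurableSet_Ioc⟩
      refine (ae_restrict_iff' measurableSet_Ioo).2 (ae_of_all _ fun x hx => ?_)
      filter_upwards [htn_tendsto.eventually_const_lt hx.2] with n hn
      exact ⟨hx.1, hn.le⟩
    have hsubn : ∀ n : ℕ, Ioc α (tn n) ⊆ Ioo α β := fun n x hx =>
      ⟨hx.1, lt_of_le_of_lt hx.2 (htn2 n)⟩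
    have hAeq : ∀ n : ℕ, (volume.restrict (Ioo α β)).restrict (Ioc α (tn n))
        = volume.restrict (Ioc α (tn n)) := by
      intro n
      rw [Measure.restrict_restrict measurableSet_Ioc,
        inter_eq_self_of_subset_left (hsubn n)]
    have hfi : ∀ n : ℕ, IntegrableOn (fun u => k / Ylim u) (Ioc α (tn n))
        (volume.restrict (Ioo α β)) := by
      intro n
      rw [IntegrableOn, hAeq n]
      exact (main (tn n) (htn1 n) (htn2 n)).1
    have hnng : 0 ≤ᶠ[ae (volume.restrict (Ioo α β))] (fun u => k / Ylim u) := by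
      refine (ae_restrict_iff' measurableSet_Ioo).2 (ae_of_all _ fun u hu => ?_)
      exact (div_pos hk (hpos u hu)).le
    have htendsto' : Tendsto (fun n : ℕ => ∫ u in Ioc α (tn n), (k / Ylim u)
        ∂(volume.restrict (Ioo α β))) atTop (𝓝 Lβ) := by
      refine hIφ.congr fun n => ?_
      rw [intervalIntegral.integral_of_le (htn1 n).le]
      show ∫ u in Ioc α (tn n), (k / Ylim u) ∂volume
        = ∫ u in Ioc α (tn n), (k / Ylim u) ∂(volume.restrict (Ioo α β))
      rw [show ∫ u in Ioc α (tn n), (k / Ylim u) ∂(volume.restrict (Ioo α β))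
        = ∫ u, (k / Ylim u) ∂((volume.restrict (Ioo α β)).restrict (Ioc α (tn n)))
        from rfl, hAeq n]
    have hInt : Integrable (fun u => k / Ylim u) (volume.restrict (Ioo α β)) :=
      hcover.integrable_of_integral_tendsto_of_nonneg_ae Lβ hfi hnng htendsto'
    have hIeq : (∫ u in Ioo α β, k / Ylim u) = Lβ :=
      hcover.integral_eq_of_tendsto Lβ hInt htendsto'
    have hIeq' : (∫ u in Ioc α β, k / Ylim u) = Lβ := by
      rw [← Measure.restrict_congr_set (Ioo_ae_eq_Ioc (a := α) (b := β))]
      exact hIeq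
    rw [intervalIntegral.integral_of_le hαβ.le, hIeq', hlimβ, hLβdef]
    ring
  intro t ht
  rcases eq_or_lt_of_le ht.1 with h1 | h1
  · rw [← h1]
    simp [hlimα]
  rcases eq_or_lt_of_le ht.2 with h2 | h2
  · rw [h2]; exact atβ
  · exact (main t h1 h2).2
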